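/- Let (Q, 𝔪, k) be a local Artinian ring with 𝔪³ = 0 whose Hilbert series is H_Q(t) = 1 + et + (e-1)t², where e is the minimal number of generators of 𝔪. Then for f ∈ Q, the pair (f, f) is an exact pair of zero divisors if and only if f is a Conca generator, i.e., f² = 0 and f𝔪 = 𝔪². -/

import Mathlib

open IsLocalRing

/-- The length of a module, defined as the Krull dimension of its lattice of submodules. -/
noncomputable def moduleLength (Q M : Type) [CommRing Q] [AddCommGroup M] [Module Q M] : ℕ∞ :=
  WithBot.unbotD 0 (Order.krullDim (Submodule Q M))

/-- The `n`-th coefficient of the Hilbert series of a local ring `Q`,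
namely `dim_k (𝔪ⁿ/𝔪ⁿ⁺¹)`, computed as the length over `Q` of `𝔪ⁿ/𝔪ⁿ⁺¹`. -/
noncomputable def hilbCoeff (Q : Type) [CommRing Q] [IsLocalRing Q] (n : ℕ) : ℕ∞ :=
  moduleLength Q
    (↥(maximalIdeal Q ^ n) ⧸
      (Submodule.comap (maximalIdeal Q ^ n).subtype (maximalIdeal Q ^ (n + 1))))


open Module Submodule

lemma le_krullDim_of_linearIndependent {K V : Type*} [DivisionRing K] [AddCommGroup V]
    [Module K V] {m : ℕ} {v : Fin m → V} (hv : LinearIndependent K v) :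
    (m : WithBot ℕ∞) ≤ Order.krullDim (Submodule K V) := by
  let U : Fin (m + 1) → Submodule K V := fun i => Submodule.span K (v '' {j | (j : ℕ) < (i : ℕ)})
  have hstep : ∀ i : Fin m, U i.castSucc < U i.succ := by
    intro i
    refine lt_of_le_of_ne (Submodule.span_mono (Set.image_mono ?_)) ?_
    · intro j hj
      simp only [Set.mem_setOf_eq, Fin.coe_castSucc, Fin.val_succ] at hj ⊢
      omega
    · intro hEq
      have hmem : v i ∈ U i.succ := Submodule.subset_span ⟨i, by simp, rfl⟩
      rw [← hEq] at hmem
      exact hv.notMem_span_image (by simp) hmem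
  exact Order.LTSeries.length_le_krullDim (⟨m, U, hstep⟩ : LTSeries (Submodule K V))

lemma finiteDimensional_of_krullDim_eq {K V : Type*} [DivisionRing K] [AddCommGroup V]
    [Module K V] {n : ℕ} (h : Order.krullDim (Submodule K V) = ((n : ℕ∞) : WithBot ℕ∞)) :
    FiniteDimensional K V := by
  by_contra hfd
  have hb := Basis.ofVectorSpace K V
  rcases Set.finite_or_infinite (Basis.ofVectorSpaceIndex K V) with hfin | hinf
  · haveI := hfin.fintype
    exact hfd (Module.Finite.of_basis hb)
  · haveI : Infinite ↥(Basis.ofVectorSpaceIndex K V) := hinf.to_subtype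
    have emb : Fin (n + 1) ↪ ↥(Basis.ofVectorSpaceIndex K V) :=
      (Fin.valEmbedding).trans (Infinite.natEmbedding _)
    have hli : LinearIndependent K (hb ∘ emb) :=
      hb.linearIndependent.comp emb emb.injective
    have := le_krullDim_of_linearIndependent hli
    rw [h] at this
    have : (n + 1 : ℕ) ≤ n := by exact_mod_cast this
    omega

lemma krullDim_submodule_eq_finrank (K V : Type*) [DivisionRing K] [AddCommGroup V]
    [Module K V] [FiniteDimensional K V] :
    Order.krullDim (Submodule K V) = ((finrank K V : ℕ∞) : WithBot ℕ∞) := by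
  refine le_antisymm ?_ ?_
  · rw [Order.krullDim_eq_iSup_length]
    rw [WithBot.coe_le_coe]
    refine iSup_le fun p => ?_
    have key : ∀ i : Fin (p.length + 1), (i : ℕ) ≤ finrank K (p i) := by
      intro i
      induction i using Fin.induction with
      | zero => simp
      | succ i ih =>
        have hlt := Submodule.finrank_lt_finrank_of_lt (p.step i)
        have := ih
        simp only [Fin.coe_castSucc] at this
        simp only [Fin.val_succ]
        omega
    have := key (Fin.last p.length)
    simp only [Fin.val_last] at this
    have h2 : finrank K (p (Fin.last p.length)) ≤ finrank K V :=
      Submodule.finrank_le _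
    exact_mod_cast this.trans h2
  · exact le_krullDim_of_linearIndependent (finBasis K V).linearIndependent

lemma key_linear_algebra {K V W : Type*} [Field K] [AddCommGroup V] [Module K V]
    [AddCommGroup W] [Module K W] [FiniteDimensional K V] [FiniteDimensional K W]
    {e : ℕ} (hV : finrank K V = e) (hW : finrank K W = e - 1)
    (g : V →ₗ[K] W) (v : V) (hv : v ≠ 0) (hvker : g v = 0) :
    LinearMap.ker g = Submodule.span K {v} ↔ Function.Surjective g := by
  have hnt : Nontrivial V := ⟨v, 0, hv⟩
  have hepos : 0 < e := hV ▸ finrank_pos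
  have hrn := LinearMap.finrank_range_add_finrank_ker g
  have hspan1 : finrank K (Submodule.span K {v}) = 1 := finrank_span_singleton hv
  constructor
  · intro hker
    have hkr : finrank K (LinearMap.ker g) = 1 := by rw [hker]; exact hspan1
    have hrange : finrank K (LinearMap.range g) = finrank K W := by
      rw [hW]; omega
    rw [← LinearMap.range_eq_top]
    exact Submodule.eq_top_of_finrank_eq hrange
  · intro hsurj
    have hrange : finrank K (LinearMap.range g) = e - 1 := by
      rw [LinearMap.range_eq_top.mpr hsurj, finrank_top, hW]
    have hkr : finrank K (LinearMap.ker g) = 1 := by omega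
    have hle : Submodule.span K {v} ≤ LinearMap.ker g := by
      rw [Submodule.span_le, Set.singleton_subset_iff]; exact hvker
    exact (Submodule.eq_of_le_of_finrank_le hle (by omega)).symm

open IsLocalRing

section RingSetup

variable (Q : Type) [CommRing Q] [IsLocalRing Q]

/-- abbreviation for the Hilbert coefficient module -/
abbrev HilbM (n : ℕ) : Type :=
  ↥(maximalIdeal Q ^ n) ⧸
    (Submodule.comap (maximalIdeal Q ^ n).subtype (maximalIdeal Q ^ (n + 1)))

lemma hilbM_torsion (n : ℕ) :
    Module.IsTorsionBySet Q (HilbM Q n) (maximalIdeal Q : Set Q) := by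
  rw [Module.isTorsionBySet_quotient_iff]
  intro x r hr
  simp only [Submodule.mem_comap, Submodule.coe_subtype, SetLike.val_smul, smul_eq_mul]
  rw [pow_succ']
  exact Ideal.mul_mem_mul hr x.2

noncomputable instance hilbMModule (n : ℕ) :
    Module (Q ⧸ maximalIdeal Q) (HilbM Q n) := (hilbM_torsion Q n).module

instance hilbMTower (n : ℕ) : IsScalarTower Q (Q ⧸ maximalIdeal Q) (HilbM Q n) :=
  Module.IsTorsionBySet.isScalarTower (hilbM_torsion Q n)

lemma hilbM_mk_smul (n : ℕ) (q : Q) (x : HilbM Q n) :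
    (Ideal.Quotient.mk (maximalIdeal Q) q) • x = q • x :=
  (hilbM_torsion Q n).mk_smul q x

/-- submodules over `Q` and over the residue field agree -/
noncomputable def hilbMOrderIso (n : ℕ) :
    Submodule (Q ⧸ maximalIdeal Q) (HilbM Q n) ≃o Submodule Q (HilbM Q n) :=
  { Submodule.restrictScalarsEmbedding Q (Q ⧸ maximalIdeal Q) (HilbM Q n) with
    invFun := fun p ↦
      { carrier := p
        add_mem' := fun h1 h2 => add_mem h1 h2
        zero_mem' := p.zero_mem
        smul_mem' := by rintro ⟨b⟩ x hx; exact p.smul_mem b hx }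
    left_inv := by intro p; ext x; simp [Submodule.restrictScalarsEmbedding]
    right_inv := by intro p; ext x; simp [Submodule.restrictScalarsEmbedding] }

end RingSetup

noncomputable instance fieldResidue (Q : Type) [CommRing Q] [IsLocalRing Q] :
    Field (Q ⧸ maximalIdeal Q) := Ideal.Quotient.field _

section Bridge

variable (Q : Type) [CommRing Q] [IsLocalRing Q]

lemma krullDim_hilbM_eq {n m : ℕ} (h : hilbCoeff Q n = (m : ℕ∞)) :
    Order.krullDim (Submodule (Q ⧸ maximalIdeal Q) (HilbM Q n)) = ((m : ℕ∞) : WithBot ℕ∞) := by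
  have h' : WithBot.unbotD 0 (Order.krullDim (Submodule Q (HilbM Q n))) = (m : ℕ∞) := h
  rw [Order.krullDim_eq_of_orderIso (hilbMOrderIso Q n)]
  obtain ⟨a, ha⟩ := WithBot.ne_bot_iff_exists.mp
    (show Order.krullDim (Submodule Q (HilbM Q n)) ≠ ⊥ from
      fun hb => by
        have := Order.krullDim_nonneg (α := Submodule Q (HilbM Q n))
        rw [hb] at this
        exact absurd this (by simp))
  rw [← ha] at h' ⊢
  rw [WithBot.unbotD_coe] at h'
  rw [h']

lemma hilbM_finiteDimensional {n m : ℕ} (h : hilbCoeff Q n = (m : ℕ∞)) :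
    FiniteDimensional (Q ⧸ maximalIdeal Q) (HilbM Q n) :=
  finiteDimensional_of_krullDim_eq (krullDim_hilbM_eq Q h)

lemma hilbM_finrank {n m : ℕ} [FiniteDimensional (Q ⧸ maximalIdeal Q) (HilbM Q n)]
    (h : hilbCoeff Q n = (m : ℕ∞)) :
    Module.finrank (Q ⧸ maximalIdeal Q) (HilbM Q n) = m := by
  have h1 := krullDim_submodule_eq_finrank (Q ⧸ maximalIdeal Q) (HilbM Q n)
  rw [krullDim_hilbM_eq Q h] at h1
  exact_mod_cast h1.symm

end Bridge

section MulMap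

variable {Q : Type} [CommRing Q] [IsLocalRing Q]

/-- the element `f*x` of `𝔪²` for `x ∈ 𝔪¹` -/
def mulFel {f : Q} (hf : f ∈ maximalIdeal Q) (x : ↥(maximalIdeal Q ^ 1)) :
    ↥(maximalIdeal Q ^ 2) :=
  ⟨f * x.1, by
    rw [pow_two]
    exact Ideal.mul_mem_mul hf (by simpa using x.2)⟩

/-- multiplication by `f` as a `Q`-linear map `𝔪¹ → 𝔪²` -/
def mulFlin {f : Q} (hf : f ∈ maximalIdeal Q) :
    ↥(maximalIdeal Q ^ 1) →ₗ[Q] ↥(maximalIdeal Q ^ 2) where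
  toFun := mulFel hf
  map_add' := by intro x y; ext; simp [mulFel, mul_add]
  map_smul' := by intro c x; ext; simp [mulFel]; ring

/-- the induced map `HilbM 1 → HilbM 2` over `Q` -/
noncomputable def mulFbar (h3 : maximalIdeal Q ^ 3 = ⊥) {f : Q} (hf : f ∈ maximalIdeal Q) :
    HilbM Q 1 →ₗ[Q] HilbM Q 2 :=
  Submodule.liftQ _
    ((Submodule.comap (maximalIdeal Q ^ 2).subtype (maximalIdeal Q ^ 3)).mkQ.comp (mulFlin hf))
    (by
      intro x hx
      simp only [Submodule.mem_comap, Submodule.coe_subtype] at hx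
      simp only [LinearMap.mem_ker, LinearMap.comp_apply, Submodule.mkQ_apply,
        Submodule.Quotient.mk_eq_zero, Submodule.mem_comap, Submodule.coe_subtype]
      show f * x.1 ∈ maximalIdeal Q ^ 3
      rw [pow_succ']
      exact Ideal.mul_mem_mul hf hx)

lemma mulFbar_mk (h3 : maximalIdeal Q ^ 3 = ⊥) {f : Q} (hf : f ∈ maximalIdeal Q)
    (x : ↥(maximalIdeal Q ^ 1)) :
    mulFbar h3 hf (Submodule.Quotient.mk x) = Submodule.Quotient.mk (mulFel hf x) := rfl

/-- the induced map as a linear map over the residue field -/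
noncomputable def gmap (h3 : maximalIdeal Q ^ 3 = ⊥) {f : Q} (hf : f ∈ maximalIdeal Q) :
    HilbM Q 1 →ₗ[Q ⧸ maximalIdeal Q] HilbM Q 2 where
  toFun := mulFbar h3 hf
  map_add' := map_add _
  map_smul' := by rintro ⟨c⟩ x; exact (mulFbar h3 hf).map_smul c x

lemma gmap_mk (h3 : maximalIdeal Q ^ 3 = ⊥) {f : Q} (hf : f ∈ maximalIdeal Q)
    (x : ↥(maximalIdeal Q ^ 1)) :
    gmap h3 hf (Submodule.Quotient.mk x) = Submodule.Quotient.mk (mulFel hf x) := rfl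

end MulMap

section Aux

variable (Q : Type) [CommRing Q] [IsLocalRing Q]

theorem aux_main (h3 : maximalIdeal Q ^ 3 = ⊥) (e : ℕ)
    [FiniteDimensional (Q ⧸ maximalIdeal Q) (HilbM Q 1)]
    [FiniteDimensional (Q ⧸ maximalIdeal Q) (HilbM Q 2)]
    (hd1 : finrank (Q ⧸ maximalIdeal Q) (HilbM Q 1) = e)
    (hd2 : finrank (Q ⧸ maximalIdeal Q) (HilbM Q 2) = e - 1)
    {f : Q} (hf : f ∈ maximalIdeal Q) (hf2 : f ∉ maximalIdeal Q ^ 2) (hff : f * f = 0) :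
    (∀ x : Q, x * f = 0 ↔ x ∈ Ideal.span {f}) ↔
      Ideal.span {f} * maximalIdeal Q = maximalIdeal Q ^ 2 := by
  set fel : ↥(maximalIdeal Q ^ 1) := ⟨f, by simpa using hf⟩ with hfel
  set v : HilbM Q 1 := Submodule.Quotient.mk fel with hvdef
  have hv : v ≠ 0 := by
    intro h
    rw [hvdef, Submodule.Quotient.mk_eq_zero] at h
    exact hf2 h
  have hgv : gmap h3 hf v = 0 := by
    rw [hvdef, gmap_mk]
    have : mulFel hf fel = 0 := Subtype.ext hff
    rw [this, Submodule.Quotient.mk_zero]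
  have key := key_linear_algebra hd1 hd2 (gmap h3 hf) v hv hgv
  have memker : ∀ (x : Q) (hx1 : x ∈ maximalIdeal Q ^ 1),
      (Submodule.Quotient.mk (⟨x, hx1⟩ : ↥(maximalIdeal Q ^ 1)) ∈
        LinearMap.ker (gmap h3 hf) ↔ f * x = 0) := by
    intro x hx1
    rw [LinearMap.mem_ker, gmap_mk, Submodule.Quotient.mk_eq_zero]
    show f * x ∈ (maximalIdeal Q ^ 3 : Ideal Q) ↔ f * x = 0
    rw [h3]
    exact Submodule.mem_bot Q
  have memspan : ∀ (x : Q) (hx1 : x ∈ maximalIdeal Q ^ 1),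
      (Submodule.Quotient.mk (⟨x, hx1⟩ : ↥(maximalIdeal Q ^ 1)) ∈
        Submodule.span (Q ⧸ maximalIdeal Q) {v} ↔
        ∃ a : Q, x - a * f ∈ maximalIdeal Q ^ 2) := by
    intro x hx1
    rw [Submodule.mem_span_singleton]
    constructor
    · rintro ⟨c, hc⟩
      obtain ⟨a, rfl⟩ := Ideal.Quotient.mk_surjective c
      rw [hilbM_mk_smul, hvdef, ← Submodule.Quotient.mk_smul, Submodule.Quotient.eq] at hc
      refine ⟨a, ?_⟩
      have hc' : (a • fel - ⟨x, hx1⟩ : ↥(maximalIdeal Q ^ 1)).1 ∈ maximalIdeal Q ^ 2 := hc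
      have : (a • fel - (⟨x, hx1⟩ : ↥(maximalIdeal Q ^ 1))).1 = a * f - x := by
        simp [hfel, smul_eq_mul]
      rw [this] at hc'
      simpa using neg_mem hc'
    · rintro ⟨a, ha⟩
      refine ⟨Ideal.Quotient.mk _ a, ?_⟩
      rw [hilbM_mk_smul, hvdef, ← Submodule.Quotient.mk_smul, Submodule.Quotient.eq]
      show (a • fel - (⟨x, hx1⟩ : ↥(maximalIdeal Q ^ 1))).1 ∈ maximalIdeal Q ^ 2
      have : (a • fel - (⟨x, hx1⟩ : ↥(maximalIdeal Q ^ 1))).1 = a * f - x := by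
        simp [hfel, smul_eq_mul]
      rw [this]
      simpa using neg_mem ha
  have surj_iff : Function.Surjective (gmap h3 hf) ↔
      Ideal.span {f} * maximalIdeal Q = maximalIdeal Q ^ 2 := by
    constructor
    · intro hsurj
      refine le_antisymm ?_ ?_
      · have h1 : Ideal.span {f} ≤ maximalIdeal Q := by
          rw [Ideal.span_le]; simpa using hf
        calc Ideal.span {f} * maximalIdeal Q ≤ maximalIdeal Q * maximalIdeal Q :=
              Ideal.mul_mono h1 le_rfl
          _ = maximalIdeal Q ^ 2 := (pow_two _).symm
      · intro w hw
        obtain ⟨y, hy⟩ := hsurj (Submodule.Quotient.mk (⟨w, hw⟩ : ↥(maximalIdeal Q ^ 2)))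
        obtain ⟨x, rfl⟩ := Submodule.Quotient.mk_surjective _ y
        rw [gmap_mk, Submodule.Quotient.eq] at hy
        have hy' : (mulFel hf x - ⟨w, hw⟩ : ↥(maximalIdeal Q ^ 2)).1 ∈ maximalIdeal Q ^ 3 := hy
        rw [h3] at hy'
        have hy'' : f * x.1 - w = 0 := by simpa [mulFel] using hy'
        have hw' : w = f * x.1 := (sub_eq_zero.mp hy'').symm
        rw [hw']
        exact Ideal.mul_mem_mul (Ideal.mem_span_singleton_self f) (by simpa using x.2)
    · intro hm y
      obtain ⟨⟨w, hw⟩, rfl⟩ := Submodule.Quotient.mk_surjective _ y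
      have hw' : w ∈ Ideal.span {f} * maximalIdeal Q := hm ▸ hw
      obtain ⟨z, hz, hzw⟩ := Ideal.mem_span_singleton_mul.mp hw'
      refine ⟨Submodule.Quotient.mk ⟨z, by simpa using hz⟩, ?_⟩
      rw [gmap_mk]
      congr 1
      exact Subtype.ext hzw
  constructor
  · intro hx
    refine surj_iff.mp (key.mp ?_)
    ext y
    obtain ⟨⟨x, hx1⟩, rfl⟩ := Submodule.Quotient.mk_surjective _ y
    rw [memker x hx1, memspan x hx1]
    constructor
    · intro h0
      obtain ⟨a, ha⟩ := Ideal.mem_span_singleton'.mp ((hx x).mp (by rwa [mul_comm] at h0))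
      exact ⟨a, by rw [ha]; simpa using zero_mem (maximalIdeal Q ^ 2)⟩
    · rintro ⟨a, ha⟩
      have h1 : (x - a * f) * f ∈ maximalIdeal Q ^ 3 := by
        rw [pow_succ]
        exact Ideal.mul_mem_mul ha hf
      rw [h3] at h1
      have h1' : (x - a * f) * f = 0 := by simpa using h1
      have : f * x = (x - a * f) * f + a * (f * f) := by ring
      rw [this, h1', hff]; ring
  · intro hm
    have hker := key.mpr (surj_iff.mpr hm)
    intro x
    constructor
    · intro h0
      by_cases hxm : x ∈ maximalIdeal Q
      · have hx1 : x ∈ maximalIdeal Q ^ 1 := by simpa using hxm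
        have hmem : Submodule.Quotient.mk (⟨x, hx1⟩ : ↥(maximalIdeal Q ^ 1)) ∈
            LinearMap.ker (gmap h3 hf) := (memker x hx1).mpr (by rwa [mul_comm] at h0)
        rw [hker] at hmem
        obtain ⟨a, ha⟩ := (memspan x hx1).mp hmem
        have h2 : x - a * f ∈ Ideal.span {f} := by
          rw [← hm] at ha
          exact Ideal.mul_le_left ha
        have h4 : a * f ∈ Ideal.span {f} := Ideal.mem_span_singleton'.mpr ⟨a, rfl⟩
        simpa using add_mem h2 h4
      · exfalso
        have hu : IsUnit x := by
          rwa [IsLocalRing.mem_maximalIdeal, mem_nonunits_iff, not_not] at hxm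
        obtain ⟨u, rfl⟩ := hu
        have hzero : f = 0 := by
          have h5 := congrArg (fun t => (↑u⁻¹ : Q) * t) h0
          simpa [← mul_assoc] using h5
        exact hf2 (hzero ▸ zero_mem _)
    · intro hxs
      obtain ⟨a, ha⟩ := Ideal.mem_span_singleton'.mp hxs
      rw [← ha]
      calc a * f * f = a * (f * f) := by ring
        _ = 0 := by rw [hff, mul_zero]

end Aux


/-- Let `(Q,𝔪,k)` be a local Artinian ring with `𝔪³ = 0` whose Hilbert series is
`1 + e t + (e-1) t²`, where `e` is the minimal number of generators of `𝔪`.  Then for a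
nonzero `f ∈ Q`, the pair `(f,f)` is an exact pair of zero divisors (i.e. `ann(f) = (f)`)
if and only if `f` is a Conca generator, i.e. `f² = 0` and `f𝔪 = 𝔪²`. -/
theorem exact_pair_self_iff_conca_generator
    (Q : Type) [CommRing Q] [IsLocalRing Q] [IsArtinianRing Q]
    (h3 : maximalIdeal Q ^ 3 = ⊥)
    (e : ℕ) (he : hilbCoeff Q 1 = e) (h2 : hilbCoeff Q 2 = ((e - 1 : ℕ) : ℕ∞))
    (f : Q) :
    (f ≠ 0 ∧ ∀ x : Q, x * f = 0 ↔ x ∈ Ideal.span {f}) ↔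
      (f ≠ 0 ∧ f ^ 2 = 0 ∧ Ideal.span {f} * maximalIdeal Q = maximalIdeal Q ^ 2) := by
  haveI fd1 : FiniteDimensional (Q ⧸ maximalIdeal Q) (HilbM Q 1) :=
    hilbM_finiteDimensional Q he
  haveI fd2 : FiniteDimensional (Q ⧸ maximalIdeal Q) (HilbM Q 2) :=
    hilbM_finiteDimensional Q h2
  have hd1 : finrank (Q ⧸ maximalIdeal Q) (HilbM Q 1) = e := hilbM_finrank Q he
  have hd2 : finrank (Q ⧸ maximalIdeal Q) (HilbM Q 2) = e - 1 := hilbM_finrank Q h2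
  constructor
  · rintro ⟨hf0, hx⟩
    have hff : f * f = 0 := (hx f).mpr (Ideal.mem_span_singleton_self f)
    have hfm : f ∈ maximalIdeal Q := by
      by_contra hxm
      have hu : IsUnit f := by
        rwa [IsLocalRing.mem_maximalIdeal, mem_nonunits_iff, not_not] at hxm
      exact (hu.mul hu).ne_zero hff
    have hf2 : f ∉ maximalIdeal Q ^ 2 := by
      intro hmem
      have hIle : maximalIdeal Q ≤ Ideal.span {f} := by
        intro x hxI
        apply (hx x).mp
        have hx3 : x * f ∈ maximalIdeal Q ^ 3 := by
          rw [pow_succ']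
          exact Ideal.mul_mem_mul hxI hmem
        rw [h3] at hx3
        exact Submodule.mem_bot Q |>.mp hx3
      have hsp : Ideal.span {f} ≤ maximalIdeal Q ^ 2 := by
        rw [Ideal.span_le]; simpa using hmem
      have hI2 : maximalIdeal Q ≤ maximalIdeal Q ^ 2 := le_trans hIle hsp
      have hI3 : maximalIdeal Q ≤ maximalIdeal Q ^ 3 := by
        calc maximalIdeal Q ≤ maximalIdeal Q ^ 2 := hI2
          _ = maximalIdeal Q * maximalIdeal Q := pow_two _
          _ ≤ maximalIdeal Q * (maximalIdeal Q ^ 2) := Ideal.mul_mono le_rfl hI2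
          _ = maximalIdeal Q ^ 3 := (pow_succ' _ _).symm
      rw [h3] at hI3
      exact hf0 (Submodule.mem_bot Q |>.mp (hI3 hfm))
    exact ⟨hf0, by rw [pow_two]; exact hff,
      (aux_main Q h3 e hd1 hd2 hfm hf2 hff).mp hx⟩
  · rintro ⟨hf0, hsq, hm⟩
    have hff : f * f = 0 := by rw [← pow_two]; exact hsq
    have hfm : f ∈ maximalIdeal Q := by
      by_contra hxm
      have hu : IsUnit f := by
        rwa [IsLocalRing.mem_maximalIdeal, mem_nonunits_iff, not_not] at hxm
      exact (hu.mul hu).ne_zero hff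
    have hf2 : f ∉ maximalIdeal Q ^ 2 := by
      intro hmem
      have h1 : maximalIdeal Q ^ 2 ≤ maximalIdeal Q ^ 3 := by
        rw [← hm]
        calc Ideal.span {f} * maximalIdeal Q
            ≤ (maximalIdeal Q ^ 2) * maximalIdeal Q :=
              Ideal.mul_mono (by rw [Ideal.span_le]; simpa using hmem) le_rfl
          _ = maximalIdeal Q ^ 3 := (pow_succ _ _).symm
      rw [h3] at h1
      exact hf0 (Submodule.mem_bot Q |>.mp (h1 hmem))
    exact ⟨hf0, (aux_main Q h3 e hd1 hd2 hfm hf2 hff).mpr hm⟩
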